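/- Let N be a finite group whose holomorph Hol(N) contains a unique Hall π-subgroup Q, where π is the set of primes dividing |N|. Let G ≤ Hol(N) and H ≤ G such that every prime factor of [G:H] divides |N|. Then [G:H] = [G ∩ Q : H ∩ Q]. -/

import Mathlib

/-- The holomorph `Hol(N) = N ⋊ Aut(N)`. -/
abbrev Hol (N : Type*) [Group N] : Type _ :=
  N ⋊[MonoidHom.id (MulAut N)] MulAut N

/-- `Q` is a Hall `π`-subgroup of `Hol(N)`, where `π` is the set of prime
divisors of `|N|`. -/
def IsHallPi {N : Type*} [Group N] (Q : Subgroup (Hol N)) : Prop :=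
  (∀ q : ℕ, q.Prime → q ∣ Nat.card Q → q ∣ Nat.card N) ∧
    (∀ q : ℕ, q.Prime → q ∣ Q.index → ¬ q ∣ Nat.card N)

/-- Key abstract lemma: in a finite group `G` with a normal subgroup `Q`,
if the prime factors of `H.index` all satisfy `P` and no prime factor of
`Q.index` satisfies `P`, then `[G : H] = [Q : H ⊓ Q]`. -/
theorem index_eq_relindex_inf_aux {G : Type*} [Group G] [Finite G]
    (Q H : Subgroup G) [Q.Normal] (P : ℕ → Prop)
    (hH : ∀ q : ℕ, q.Prime → q ∣ H.index → P q)
    (hQ : ∀ q : ℕ, q.Prime → q ∣ Q.index → ¬ P q) :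
    H.index = (H ⊓ Q).relIndex Q := by
  have h1 : (H ⊓ Q).relIndex Q * Q.index = (H ⊓ Q).index := by
    rw [← Subgroup.relIndex_top_right Q, ← Subgroup.relIndex_top_right (H ⊓ Q)]
    exact Subgroup.relIndex_mul_relIndex _ _ ⊤ inf_le_right le_top
  have h2 : (H ⊓ Q).relIndex H * H.index = (H ⊓ Q).index := by
    rw [← Subgroup.relIndex_top_right H, ← Subgroup.relIndex_top_right (H ⊓ Q)]
    exact Subgroup.relIndex_mul_relIndex _ _ ⊤ inf_le_left le_top
  have h3 : (H ⊓ Q).relIndex H = Q.relIndex H := Subgroup.inf_relIndex_left H Q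
  have h4 : Q.relIndex H = Q.relIndex (H ⊔ Q) := (Subgroup.relIndex_sup_right H Q).symm
  have h5 : Q.relIndex (H ⊔ Q) * (H ⊔ Q).index = Q.index := by
    rw [← Subgroup.relIndex_top_right Q, ← Subgroup.relIndex_top_right (H ⊔ Q)]
    exact Subgroup.relIndex_mul_relIndex _ _ ⊤ le_sup_right le_top
  set c := Q.relIndex (H ⊔ Q) with hc
  have hcpos : 0 < c :=
    Nat.pos_of_ne_zero (Subgroup.index_ne_zero_of_finite (H := Q.subgroupOf (H ⊔ Q)))
  have e1 : (H ⊓ Q).relIndex Q * Q.index = c * H.index := by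
    rw [h1, ← h2, h3, h4]
  have key : (H ⊓ Q).relIndex Q * (H ⊔ Q).index = H.index := by
    apply Nat.eq_of_mul_eq_mul_left hcpos
    calc c * ((H ⊓ Q).relIndex Q * (H ⊔ Q).index)
        = (H ⊓ Q).relIndex Q * (c * (H ⊔ Q).index) := by ring
      _ = (H ⊓ Q).relIndex Q * Q.index := by rw [h5]
      _ = c * H.index := e1
  have hdvdH : (H ⊔ Q).index ∣ H.index := Dvd.intro_left _ key
  have hdvdQ : (H ⊔ Q).index ∣ Q.index := Dvd.intro_left _ h5
  have hone : (H ⊔ Q).index = 1 := by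
    by_contra hne
    obtain ⟨p, hp, hpd⟩ := Nat.exists_prime_and_dvd hne
    exact hQ p hp (hpd.trans hdvdQ) (hH p hp (hpd.trans hdvdH))
  rw [← key, hone, mul_one]

theorem relindex_inf_hall {N : Type*} [Group N] [Finite N]
    (Q : Subgroup (Hol N)) (hQ : IsHallPi Q)
    (huniq : ∀ Q' : Subgroup (Hol N), IsHallPi Q' → Q' = Q)
    (G H : Subgroup (Hol N)) (hHG : H ≤ G)
    (hdiv : ∀ q : ℕ, q.Prime → q ∣ H.relIndex G → q ∣ Nat.card N) :
    H.relIndex G = (H ⊓ Q).relIndex (G ⊓ Q) := by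
  haveI : Finite (Hol N) :=
    Finite.of_equiv (N × MulAut N)
      ⟨fun p => ⟨p.1, p.2⟩, fun x => (x.left, x.right), fun p => rfl, fun x => rfl⟩
  -- `Q` is normal, being the unique Hall `π`-subgroup.
  have hQn : Q.Normal := by
    constructor
    intro n hn g
    have hinj : Function.Injective (MulAut.conj g).toMonoidHom := (MulAut.conj g).injective
    have hmap : IsHallPi (Q.map (MulAut.conj g).toMonoidHom) := by
      constructor
      · intro q hq hqd
        apply hQ.1 q hq
        rwa [Nat.card_congr (Q.equivMapOfInjective _ hinj).toEquiv]
      · intro q hq hqd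
        apply hQ.2 q hq
        rwa [Subgroup.index_map_eq Q (MulAut.conj g).surjective
          (by rw [(MonoidHom.ker_eq_bot_iff _).mpr hinj]; exact bot_le)] at hqd
    have hQQ := huniq _ hmap
    rw [← hQQ]
    exact ⟨n, hn, rfl⟩
  have main := index_eq_relindex_inf_aux (Q.subgroupOf G) (H.subgroupOf G)
    (fun q => q ∣ Nat.card N)
    (fun q hq hqd => hdiv q hq hqd)
    (fun q hq hqd => hQ.2 q hq (hqd.trans (Subgroup.relIndex_dvd_index_of_normal Q G)))
  have hGQ : (G ⊓ Q).subgroupOf G = Q.subgroupOf G := by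
    rw [Subgroup.subgroupOf, Subgroup.comap_inf, ← Subgroup.subgroupOf, ← Subgroup.subgroupOf,
      Subgroup.subgroupOf_self, top_inf_eq]
  have hHQ : (H ⊓ Q).subgroupOf G = H.subgroupOf G ⊓ Q.subgroupOf G := by
    rw [Subgroup.subgroupOf, Subgroup.comap_inf]; rfl
  rw [← Subgroup.relIndex_subgroupOf (inf_le_left : G ⊓ Q ≤ G), hGQ, hHQ]
  exact main
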